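/- arXiv:1012.5265 — 2 statements merged into one kernel-verified Lean document; each statement's English description precedes it below -/
import Mathlib

section
/- Let λ be a Young diagram with ℓ rows total, having k distinct row lengths occurring with multiplicities d₁, ..., d_k, and let N be the corresponding nilpotent Jordan matrix. Then the number of distinct matrices of the form σ N σ^{-1} with σ ∈ S_n (acting as a permutation matrix) that are in highest form equals ℓ! / (d₁! d₂! ⋯ d_k!). -/
/-- `ord` enumerates the cells of `μ` in English reading order. -/
def EnglishOrd (μ : YoungDiagram) (ord : Fin μ.card ≃ μ.cells) : Prop :=
  ∀ i j : Fin μ.card, i < j →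
    ((ord i : ℕ × ℕ).1 < (ord j : ℕ × ℕ).1 ∨
      ((ord i : ℕ × ℕ).1 = (ord j : ℕ × ℕ).1 ∧ (ord i : ℕ × ℕ).2 < (ord j : ℕ × ℕ).2))

/-- The adjacent-pair matrix of a filling `T : μ.cells ≃ Fin μ.card`. -/
def adjPairMatrix (μ : YoungDiagram) (T : μ.cells ≃ Fin μ.card) :
    Matrix (Fin μ.card) (Fin μ.card) ℂ :=
  Matrix.of fun i j =>
    if (T.symm j : ℕ × ℕ).1 = (T.symm i : ℕ × ℕ).1 ∧
        (T.symm j : ℕ × ℕ).2 = (T.symm i : ℕ × ℕ).2 + 1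
    then 1 else 0

/-- The permutation matrix of `σ`, whose `i`-th column is `e_{σ(i)}`. -/
def permMatrix {n : ℕ} (σ : Equiv.Perm (Fin n)) : Matrix (Fin n) (Fin n) ℂ :=
  Matrix.of fun i j => if σ j = i then 1 else 0

/-- `X i k` is a pivot of `X`. -/
def IsPivot {n : ℕ} (X : Matrix (Fin n) (Fin n) ℂ) (i k : Fin n) : Prop :=
  X i k ≠ 0 ∧ (∀ j, j < k → X i j = 0) ∧ (∀ j, i < j → X j k = 0)

open Classical in
/-- `r_j`: the (one-indexed) row of the pivot in column `j` if it exists, `0` otherwise. -/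
noncomputable def pivotRow {n : ℕ} (X : Matrix (Fin n) (Fin n) ℂ) (j : Fin n) : ℕ :=
  if h : ∃ i, IsPivot X i j then (h.choose : ℕ) + 1 else 0

/-- Highest form: strictly upper triangular with nondecreasing pivot rows. -/
def IsHighestForm {n : ℕ} (X : Matrix (Fin n) (Fin n) ℂ) : Prop :=
  (∀ i j : Fin n, j ≤ i → X i j = 0) ∧ Monotone (pivotRow X)

namespace Stmt5
open Equiv YoungDiagram

variable {μ : YoungDiagram}

lemma row_lt_colLen {u : ℕ × ℕ} (hu : u ∈ μ.cells) : u.1 < μ.colLen 0 := by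
  rw [← YoungDiagram.mem_iff_lt_colLen]
  exact μ.up_left_mem le_rfl (Nat.zero_le _)
    (by simpa using (YoungDiagram.mem_cells (μ := μ) (u.1, u.2)).1 (by simpa using hu))

lemma left_mem {r c : ℕ} (h : (r, c + 1) ∈ μ.cells) : (r, c) ∈ μ.cells := by
  rw [YoungDiagram.mem_cells] at h ⊢
  exact μ.up_left_mem le_rfl (Nat.le_succ c) h

lemma cell_eq_iff {u v : μ.cells} :
    u = v ↔ ((u : ℕ × ℕ).1 = (v : ℕ × ℕ).1 ∧ (u : ℕ × ℕ).2 = (v : ℕ × ℕ).2) := by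
  constructor
  · rintro rfl; exact ⟨rfl, rfl⟩
  · rintro ⟨h1, h2⟩; exact Subtype.ext (Prod.ext h1 h2)

/-- the sorting key: (column, position of the row under `f⁻¹`), ordered lexicographically. -/
def key (f : Perm (Fin (μ.colLen 0))) (u : μ.cells) : Lex (ℕ × ℕ) :=
  toLex ((u : ℕ × ℕ).2, (f.symm ⟨(u : ℕ × ℕ).1, row_lt_colLen u.2⟩ : ℕ))

lemma key_lt_iff {f : Perm (Fin (μ.colLen 0))} {u v : μ.cells} :
    key f u < key f v ↔
      ((u : ℕ × ℕ).2 < (v : ℕ × ℕ).2 ∨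
        ((u : ℕ × ℕ).2 = (v : ℕ × ℕ).2 ∧
          (f.symm ⟨(u : ℕ × ℕ).1, row_lt_colLen u.2⟩ : Fin (μ.colLen 0)) <
            f.symm ⟨(v : ℕ × ℕ).1, row_lt_colLen v.2⟩)) := by
  rw [key, key, Prod.Lex.lt_iff]
  exact Iff.rfl

lemma key_injective (f : Perm (Fin (μ.colLen 0))) : Function.Injective (key f) := by
  intro u v h
  rw [key, key] at h
  have h' := congrArg ofLex h
  have h2 : (u : ℕ × ℕ).2 = (v : ℕ × ℕ).2 := congrArg Prod.fst h'
  have h1' : (f.symm ⟨(u : ℕ × ℕ).1, row_lt_colLen u.2⟩ : ℕ) =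
      (f.symm ⟨(v : ℕ × ℕ).1, row_lt_colLen v.2⟩ : ℕ) := congrArg Prod.snd h'
  have h1 : (u : ℕ × ℕ).1 = (v : ℕ × ℕ).1 := by
    have := f.symm.injective (Fin.ext h1')
    exact congrArg Fin.val this
  exact cell_eq_iff.2 ⟨h1, h2⟩

noncomputable def keyEquiv (f : Perm (Fin (μ.colLen 0))) :
    μ.cells ≃ {x // x ∈ μ.cells.attach.image (key f)} :=
  Equiv.ofBijective (fun u => ⟨key f u, Finset.mem_image.2 ⟨u, Finset.mem_attach _ _, rfl⟩⟩)
    ⟨fun u v h => key_injective f (Subtype.ext_iff.1 h), by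
      rintro ⟨b, hb⟩
      obtain ⟨u, -, rfl⟩ := Finset.mem_image.1 hb
      exact ⟨u, rfl⟩⟩

lemma card_keyImage (f : Perm (Fin (μ.colLen 0))) :
    (μ.cells.attach.image (key f)).card = μ.card := by
  rw [Finset.card_image_of_injective _ (key_injective f), Finset.card_attach]

/-- the filling associated to a row-ordering `f`: column-reading order w.r.t. `key f`. -/
noncomputable def Tf (f : Perm (Fin (μ.colLen 0))) : μ.cells ≃ Fin μ.card :=
  (keyEquiv f).trans ((μ.cells.attach.image (key f)).orderIsoOfFin (card_keyImage f)).symm.toEquiv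

lemma Tf_lt_iff {f : Perm (Fin (μ.colLen 0))} {u v : μ.cells} :
    Tf f u < Tf f v ↔ key f u < key f v := by
  have : Tf f u < Tf f v ↔ keyEquiv f u < keyEquiv f v :=
    OrderIso.lt_iff_lt ((μ.cells.attach.image (key f)).orderIsoOfFin (card_keyImage f)).symm
  rw [this]
  exact Subtype.mk_lt_mk


/-! ### Pivot structure of `adjPairMatrix` -/

lemma adj_ne_zero_iff (T : μ.cells ≃ Fin μ.card) (i j : Fin μ.card) :
    adjPairMatrix μ T i j ≠ 0 ↔
      ((T.symm j : ℕ × ℕ).1 = (T.symm i : ℕ × ℕ).1 ∧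
        (T.symm j : ℕ × ℕ).2 = (T.symm i : ℕ × ℕ).2 + 1) := by
  unfold adjPairMatrix
  rw [Matrix.of_apply]
  split_ifs with h <;> simp [h]

lemma no_pivot_zero_col (T : μ.cells ≃ Fin μ.card) {r : ℕ} (h : (r, 0) ∈ μ.cells) :
    pivotRow (adjPairMatrix μ T) (T ⟨(r, 0), h⟩) = 0 := by
  have hno : ¬∃ i, IsPivot (adjPairMatrix μ T) i (T ⟨(r, 0), h⟩) := by
    rintro ⟨i, hne, -, -⟩
    rw [adj_ne_zero_iff] at hne
    have := hne.2
    rw [Equiv.symm_apply_apply] at this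
    exact Nat.succ_ne_zero _ this.symm
  unfold pivotRow
  rw [dif_neg hno]

lemma isPivot_succ (T : μ.cells ≃ Fin μ.card) {r c : ℕ} (h : (r, c + 1) ∈ μ.cells) :
    IsPivot (adjPairMatrix μ T) (T ⟨(r, c), left_mem h⟩) (T ⟨(r, c + 1), h⟩) := by
  refine ⟨?_, ?_, ?_⟩
  · rw [adj_ne_zero_iff, Equiv.symm_apply_apply, Equiv.symm_apply_apply]
    exact ⟨rfl, rfl⟩
  · intro j hj
    by_contra hne
    rw [show ¬adjPairMatrix μ T (T ⟨(r, c), left_mem h⟩) j = 0 ↔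
        adjPairMatrix μ T (T ⟨(r, c), left_mem h⟩) j ≠ 0 from Iff.rfl,
      adj_ne_zero_iff, Equiv.symm_apply_apply] at hne
    have : T.symm j = ⟨(r, c + 1), h⟩ := cell_eq_iff.2 ⟨hne.1, hne.2⟩
    have : j = T ⟨(r, c + 1), h⟩ := by rw [← this, Equiv.apply_symm_apply]
    exact absurd this (ne_of_lt hj)
  · intro j hj
    by_contra hne
    rw [show ¬adjPairMatrix μ T j (T ⟨(r, c + 1), h⟩) = 0 ↔
        adjPairMatrix μ T j (T ⟨(r, c + 1), h⟩) ≠ 0 from Iff.rfl,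
      adj_ne_zero_iff, Equiv.symm_apply_apply] at hne
    have hcell : T.symm j = ⟨(r, c), left_mem h⟩ :=
      cell_eq_iff.2 ⟨hne.1.symm, Nat.succ_injective hne.2.symm⟩
    have : j = T ⟨(r, c), left_mem h⟩ := by rw [← hcell, Equiv.apply_symm_apply]
    exact absurd this (ne_of_gt hj)

lemma pivotRow_succ (T : μ.cells ≃ Fin μ.card) {r c : ℕ} (h : (r, c + 1) ∈ μ.cells) :
    pivotRow (adjPairMatrix μ T) (T ⟨(r, c + 1), h⟩) =
      (T ⟨(r, c), left_mem h⟩ : ℕ) + 1 := by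
  have hex : ∃ i, IsPivot (adjPairMatrix μ T) i (T ⟨(r, c + 1), h⟩) := ⟨_, isPivot_succ T h⟩
  unfold pivotRow
  rw [dif_pos hex]
  congr 1
  have hne := hex.choose_spec.1
  rw [adj_ne_zero_iff, Equiv.symm_apply_apply] at hne
  have hcell : T.symm hex.choose = ⟨(r, c), left_mem h⟩ :=
    cell_eq_iff.2 ⟨hne.1.symm, Nat.succ_injective hne.2.symm⟩
  have : hex.choose = T ⟨(r, c), left_mem h⟩ := by rw [← hcell, Equiv.apply_symm_apply]
  rw [this]

/-- for `adjPairMatrix`, `pivotRow = 0` exactly at the column-0 cells. -/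
lemma pivotRow_eq_zero_iff (T : μ.cells ≃ Fin μ.card) (j : Fin μ.card) :
    pivotRow (adjPairMatrix μ T) j = 0 ↔ (T.symm j : ℕ × ℕ).2 = 0 := by
  obtain ⟨⟨⟨rr, cc⟩, hm⟩, hc⟩ : ∃ u : μ.cells, T.symm j = u := ⟨_, rfl⟩
  have hj : j = T ⟨(rr, cc), hm⟩ := by rw [← hc, Equiv.apply_symm_apply]
  rw [hc]
  cases cc with
  | zero => subst hj; simp [no_pivot_zero_col T hm]
  | succ c =>
    subst hj
    rw [pivotRow_succ T hm]
    simp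


/-! ### `Tf f` yields a highest form -/

lemma highestForm_Tf (f : Perm (Fin (μ.colLen 0))) :
    IsHighestForm (adjPairMatrix μ (Tf f)) := by
  constructor
  · intro i j hji
    by_contra hne
    rw [show ¬adjPairMatrix μ (Tf f) i j = 0 ↔ adjPairMatrix μ (Tf f) i j ≠ 0 from Iff.rfl,
      adj_ne_zero_iff] at hne
    have hkey : key f ((Tf f).symm i) < key f ((Tf f).symm j) := by
      rw [key_lt_iff]
      left
      rw [hne.2]
      exact Nat.lt_succ_self _
    have := Tf_lt_iff.2 hkey
    rw [Equiv.apply_symm_apply, Equiv.apply_symm_apply] at this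
    exact absurd this (not_lt.2 hji)
  · intro j j' hjj'
    rcases eq_or_lt_of_le hjj' with rfl | hlt
    · exact le_rfl
    obtain ⟨⟨⟨r, c⟩, hm⟩, hc⟩ : ∃ u : μ.cells, (Tf f).symm j = u := ⟨_, rfl⟩
    obtain ⟨⟨⟨r', c'⟩, hm'⟩, hc'⟩ : ∃ u : μ.cells, (Tf f).symm j' = u := ⟨_, rfl⟩
    have hj : j = Tf f ⟨(r, c), hm⟩ := by rw [← hc, Equiv.apply_symm_apply]
    have hj' : j' = Tf f ⟨(r', c'), hm'⟩ := by rw [← hc', Equiv.apply_symm_apply]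
    have hkey : key f ⟨(r, c), hm⟩ < key f ⟨(r', c'), hm'⟩ := by
      rw [← Tf_lt_iff, ← hj, ← hj']; exact hlt
    rw [key_lt_iff] at hkey
    cases c with
    | zero =>
      rw [hj, no_pivot_zero_col (Tf f) hm]
      exact Nat.zero_le _
    | succ cp =>
      cases c' with
      | zero =>
        exfalso
        rcases hkey with h | ⟨h, -⟩
        · exact Nat.not_succ_le_zero _ h
        · exact Nat.succ_ne_zero _ h
      | succ cp' =>
        rw [hj, hj', pivotRow_succ (Tf f) hm, pivotRow_succ (Tf f) hm']
        have hkey2 : key f ⟨(r, cp), left_mem hm⟩ < key f ⟨(r', cp'), left_mem hm'⟩ := by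
          rw [key_lt_iff]
          rcases hkey with h | ⟨h, h2⟩
          · left; exact Nat.succ_lt_succ_iff.1 h
          · right; exact ⟨Nat.succ_injective h, h2⟩
        have := Tf_lt_iff.2 hkey2
        exact Nat.succ_le_succ (le_of_lt this)


/-! ### Recovering the ordered row lengths from the matrix -/

def Reach {n : ℕ} (M : Matrix (Fin n) (Fin n) ℂ) : Fin n → Fin n → Prop :=
  Relation.ReflTransGen (fun a b => M a b ≠ 0)

lemma mem_cells_of_lt_rowLen {r c : ℕ} (h : c < μ.rowLen r) : (r, c) ∈ μ.cells := by
  rw [YoungDiagram.mem_cells]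
  exact YoungDiagram.mem_iff_lt_rowLen.2 h

lemma reach_iff (T : μ.cells ≃ Fin μ.card) {r : ℕ} (h : (r, 0) ∈ μ.cells) (j : Fin μ.card) :
    Reach (adjPairMatrix μ T) (T ⟨(r, 0), h⟩) j ↔
      ∃ c, ∃ hc : (r, c) ∈ μ.cells, j = T ⟨(r, c), hc⟩ := by
  constructor
  · intro hreach
    induction hreach with
    | refl => exact ⟨0, h, rfl⟩
    | tail hab hstep ih =>
      rename_i b j'
      obtain ⟨c, hc, rfl⟩ := ih
      rw [show (adjPairMatrix μ T (T ⟨(r, c), hc⟩) j' ≠ 0) ↔ _ from adj_ne_zero_iff T _ j',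
        Equiv.symm_apply_apply] at hstep
      have hmem : ((T.symm j' : ℕ × ℕ).1, (T.symm j' : ℕ × ℕ).2) ∈ μ.cells := by
        simpa using (T.symm j').2
      rw [hstep.1, hstep.2] at hmem
      refine ⟨c + 1, hmem, ?_⟩
      have : T.symm j' = ⟨(r, c + 1), hmem⟩ := cell_eq_iff.2 ⟨hstep.1, hstep.2⟩
      rw [← this, Equiv.apply_symm_apply]
  · rintro ⟨c, hc, rfl⟩
    induction c with
    | zero => exact Relation.ReflTransGen.refl
    | succ cp ih =>
      refine Relation.ReflTransGen.tail (ih (left_mem hc)) ?_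
      rw [show (adjPairMatrix μ T (T ⟨(r, cp), left_mem hc⟩) (T ⟨(r, cp + 1), hc⟩) ≠ 0) ↔ _ from
        adj_ne_zero_iff T _ _, Equiv.symm_apply_apply, Equiv.symm_apply_apply]
      exact ⟨rfl, rfl⟩

lemma card_reach (T : μ.cells ≃ Fin μ.card) {r : ℕ} (h : (r, 0) ∈ μ.cells) :
    Nat.card {j | Reach (adjPairMatrix μ T) (T ⟨(r, 0), h⟩) j} = μ.rowLen r := by
  have hb : Function.Bijective
      (fun c : Fin (μ.rowLen r) =>
        (⟨T ⟨(r, c), mem_cells_of_lt_rowLen c.2⟩,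
          (reach_iff T h _).2 ⟨c, mem_cells_of_lt_rowLen c.2, rfl⟩⟩ :
          {j | Reach (adjPairMatrix μ T) (T ⟨(r, 0), h⟩) j})) := by
    constructor
    · intro c c' hcc'
      have := T.injective (Subtype.ext_iff.1 hcc')
      have := cell_eq_iff.1 this
      exact Fin.ext this.2
    · rintro ⟨j, hj⟩
      obtain ⟨c, hc, rfl⟩ := (reach_iff T h _).1 hj
      have hcr : c < μ.rowLen r := by
        have := hc
        rw [YoungDiagram.mem_cells] at this
        exact YoungDiagram.mem_iff_lt_rowLen.1 this
      exact ⟨⟨c, hcr⟩, Subtype.ext rfl⟩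
  calc Nat.card {j | Reach (adjPairMatrix μ T) (T ⟨(r, 0), h⟩) j}
      = Nat.card (Fin (μ.rowLen r)) := (Nat.card_congr (Equiv.ofBijective _ hb)).symm
    _ = μ.rowLen r := by simp

lemma mem0 (s : Fin (μ.colLen 0)) : ((s : ℕ), 0) ∈ μ.cells := by
  rw [YoungDiagram.mem_cells]
  exact YoungDiagram.mem_iff_lt_colLen.2 s.2

lemma rowEnum_strictMono (f : Perm (Fin (μ.colLen 0))) :
    StrictMono (fun t => Tf f ⟨((f t : ℕ), 0), mem0 (f t)⟩) := by
  intro t t' htt'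
  rw [Tf_lt_iff, key_lt_iff]
  right
  refine ⟨rfl, ?_⟩
  have e1 : (⟨((f t : ℕ), 0), mem0 (f t)⟩ : μ.cells) = ⟨((f t : ℕ), 0), mem0 (f t)⟩ := rfl
  show f.symm ⟨(f t : ℕ), _⟩ < f.symm ⟨(f t' : ℕ), _⟩
  have h1 : (⟨(f t : ℕ), row_lt_colLen (mem0 (f t))⟩ : Fin (μ.colLen 0)) = f t := Fin.ext rfl
  have h2 : (⟨(f t' : ℕ), row_lt_colLen (mem0 (f t'))⟩ : Fin (μ.colLen 0)) = f t' := Fin.ext rfl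
  rw [h1, h2, Equiv.symm_apply_apply, Equiv.symm_apply_apply]
  exact htt'

lemma rowEnum_range (f : Perm (Fin (μ.colLen 0))) :
    Set.range (fun t => Tf f ⟨((f t : ℕ), 0), mem0 (f t)⟩) =
      {j | pivotRow (adjPairMatrix μ (Tf f)) j = 0} := by
  ext j
  rw [Set.mem_setOf_eq, pivotRow_eq_zero_iff]
  constructor
  · rintro ⟨t, rfl⟩
    rw [Equiv.symm_apply_apply]
  · intro hcol
    obtain ⟨⟨⟨r, c⟩, hm⟩, hc⟩ : ∃ u : μ.cells, (Tf f).symm j = u := ⟨_, rfl⟩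
    have hc0 : c = 0 := by rw [hc] at hcol; exact hcol
    subst hc0
    have hrl : r < μ.colLen 0 := row_lt_colLen hm
    refine ⟨f.symm ⟨r, hrl⟩, ?_⟩
    have : (⟨((f (f.symm ⟨r, hrl⟩) : ℕ), 0), mem0 _⟩ : μ.cells) = ⟨(r, 0), hm⟩ := by
      apply cell_eq_iff.2
      constructor
      · show ((f (f.symm ⟨r, hrl⟩) : ℕ)) = r
        rw [Equiv.apply_symm_apply]
      · rfl
    show Tf f ⟨((f (f.symm ⟨r, hrl⟩) : ℕ), 0), mem0 _⟩ = j
    rw [this, ← hc, Equiv.apply_symm_apply]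

lemma rowLen_eq_of_adj_eq {f g : Perm (Fin (μ.colLen 0))}
    (hM : adjPairMatrix μ (Tf f) = adjPairMatrix μ (Tf g)) (t : Fin (μ.colLen 0)) :
    μ.rowLen (f t) = μ.rowLen (g t) := by
  have hr : Set.range (fun t => Tf f ⟨((f t : ℕ), 0), mem0 (f t)⟩) =
      Set.range (fun t => Tf g ⟨((g t : ℕ), 0), mem0 (g t)⟩) := by
    rw [rowEnum_range, rowEnum_range, hM]
  haveI : WellFoundedLT (Fin (μ.colLen 0)) := inferInstance
  have hab := (StrictMono.range_inj (rowEnum_strictMono f) (rowEnum_strictMono g)).1 hr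
  have hat := congrFun hab t
  calc μ.rowLen (f t)
      = Nat.card {j | Reach (adjPairMatrix μ (Tf f)) (Tf f ⟨((f t : ℕ), 0), mem0 (f t)⟩) j} :=
        (card_reach (Tf f) (mem0 (f t))).symm
    _ = Nat.card {j | Reach (adjPairMatrix μ (Tf g)) (Tf g ⟨((g t : ℕ), 0), mem0 (g t)⟩) j} := by
        rw [hM, hat]
    _ = μ.rowLen (g t) := card_reach (Tf g) (mem0 (g t))


/-! ### Uniqueness of fillings inducing a given order -/

lemma perm_eq_id_of_strictMono {n : ℕ} (π : Equiv.Perm (Fin n)) (h : StrictMono ⇑π)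
    (h' : StrictMono ⇑π.symm) : ∀ i, π i = i := by
  haveI : WellFoundedLT (Fin n) := inferInstance
  intro i
  have h1 : i ≤ π i := h.le_apply
  have h2 : i ≤ π.symm i := h'.le_apply
  have h3 : π i ≤ π (π.symm i) := h.monotone h2
  rw [Equiv.apply_symm_apply] at h3
  exact le_antisymm h3 h1

lemma equiv_eq_of_lt_iff {T₁ T₂ : μ.cells ≃ Fin μ.card}
    (h : ∀ u v, T₁ u < T₁ v ↔ T₂ u < T₂ v) : T₁ = T₂ := by
  have hmono : StrictMono (T₂.symm.trans T₁) := by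
    intro i j hij
    have := (h (T₂.symm i) (T₂.symm j)).2
    simp only [Equiv.apply_symm_apply] at this
    exact this hij
  have hmono' : StrictMono (T₂.symm.trans T₁).symm := by
    intro i j hij
    show T₂ (T₁.symm i) < T₂ (T₁.symm j)
    have := (h (T₁.symm i) (T₁.symm j)).1
    simp only [Equiv.apply_symm_apply] at this
    exact this hij
  ext u
  have := perm_eq_id_of_strictMono _ hmono hmono' (T₂ u)
  simp only [Equiv.trans_apply, Equiv.symm_apply_apply] at this
  exact this.symm ▸ rfl

/-! ### Every highest form comes from some `Tf f` -/

theorem exists_Tf_of_highestForm (T : μ.cells ≃ Fin μ.card)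
    (hHF : IsHighestForm (adjPairMatrix μ T)) : ∃ f, T = Tf f := by
  classical
  obtain ⟨htri, hmono⟩ := hHF
  set Z : Finset (Fin μ.card) :=
    Finset.univ.filter (fun j => (T.symm j : ℕ × ℕ).2 = 0) with hZ
  have hmemZ : ∀ j, j ∈ Z ↔ (T.symm j : ℕ × ℕ).2 = 0 := by
    intro j; simp [hZ]
  -- `Z` has `ℓ` elements
  have hρinj : Function.Injective (fun s : Fin (μ.colLen 0) => T ⟨((s : ℕ), 0), mem0 s⟩) := by
    intro s s' hss'
    have := cell_eq_iff.1 (T.injective hss')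
    exact Fin.ext this.1
  have hZim : Z = Finset.univ.image (fun s : Fin (μ.colLen 0) => T ⟨((s : ℕ), 0), mem0 s⟩) := by
    ext j
    rw [hmemZ, Finset.mem_image]
    constructor
    · intro hcol
      obtain ⟨⟨⟨r, c⟩, hm⟩, hc⟩ : ∃ u : μ.cells, T.symm j = u := ⟨_, rfl⟩
      have hc0 : c = 0 := by rw [hc] at hcol; exact hcol
      subst hc0
      refine ⟨⟨r, row_lt_colLen hm⟩, Finset.mem_univ _, ?_⟩
      beta_reduce
      have hcc : (⟨(((⟨r, row_lt_colLen hm⟩ : Fin (μ.colLen 0)) : ℕ), 0),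
          mem0 ⟨r, row_lt_colLen hm⟩⟩ : μ.cells) = T.symm j := by
        rw [hc]
      rw [hcc, Equiv.apply_symm_apply]
    · rintro ⟨s, -, rfl⟩
      rw [Equiv.symm_apply_apply]
  have hZcard : Z.card = μ.colLen 0 := by
    rw [hZim, Finset.card_image_of_injective _ hρinj, Finset.card_univ, Fintype.card_fin]
  have hln : μ.colLen 0 ≤ μ.card := by
    have := Finset.card_le_univ Z
    rwa [hZcard, Fintype.card_fin] at this
  -- `Z` is downward closed, hence an initial segment
  have hdown : ∀ j j' : Fin μ.card, j ≤ j' → j' ∈ Z → j ∈ Z := by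
    intro j j' hle hj'
    rw [hmemZ] at hj' ⊢
    rw [← pivotRow_eq_zero_iff T] at hj' ⊢
    have := hmono hle
    omega
  have hZeq : ∀ j : Fin μ.card, j ∈ Z ↔ (j : ℕ) < μ.colLen 0 := by
    have hsub : Z ⊆ Finset.univ.filter (fun j : Fin μ.card => (j : ℕ) < μ.colLen 0) := by
      intro j hj
      rw [Finset.mem_filter]
      refine ⟨Finset.mem_univ _, ?_⟩
      have hIic : Finset.Iic j ⊆ Z := fun i hi => hdown i j (Finset.mem_Iic.1 hi) hj
      have hcard := Finset.card_le_card hIic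
      rw [Fin.card_Iic, hZcard] at hcard
      omega
    have hWle : (Finset.univ.filter (fun j : Fin μ.card => (j : ℕ) < μ.colLen 0)).card ≤
        μ.colLen 0 := by
      have hsub2 : ∀ a ∈ Finset.univ.filter (fun j : Fin μ.card => (j : ℕ) < μ.colLen 0),
          (a : ℕ) ∈ Finset.range (μ.colLen 0) := by
        intro a ha
        rw [Finset.mem_range]
        exact (Finset.mem_filter.1 ha).2
      have := Finset.card_le_card_of_injOn (fun j : Fin μ.card => (j : ℕ)) hsub2
        (fun a _ b _ hab => Fin.ext hab)
      rwa [Finset.card_range] at this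
    have hEq : Z = Finset.univ.filter (fun j : Fin μ.card => (j : ℕ) < μ.colLen 0) :=
      Finset.eq_of_subset_of_card_le hsub (by rw [hZcard]; exact hWle)
    intro j
    rw [hEq, Finset.mem_filter]
    simp
  -- construct the row ordering `f`
  have hemb : ∀ t : Fin (μ.colLen 0), (t : ℕ) < μ.card := fun t => lt_of_lt_of_le t.2 hln
  have hcol0 : ∀ t : Fin (μ.colLen 0), (T.symm ⟨(t : ℕ), hemb t⟩ : ℕ × ℕ).2 = 0 := by
    intro t
    rw [← hmemZ]
    rw [hZeq]
    exact t.2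
  set f0 : Fin (μ.colLen 0) → Fin (μ.colLen 0) :=
    fun t => ⟨(T.symm ⟨(t : ℕ), hemb t⟩ : ℕ × ℕ).1,
      row_lt_colLen (T.symm ⟨(t : ℕ), hemb t⟩).2⟩ with hf0
  have hf0inj : Function.Injective f0 := by
    intro t t' h
    have hcell : T.symm ⟨(t : ℕ), hemb t⟩ = T.symm ⟨(t' : ℕ), hemb t'⟩ := by
      apply cell_eq_iff.2
      constructor
      · exact congrArg Fin.val h
      · rw [hcol0 t, hcol0 t']
    have h2 := T.symm.injective hcell
    exact Fin.ext (show (t : ℕ) = t' from congrArg (Fin.val (n := μ.card)) h2)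
  obtain ⟨f, hff0⟩ : ∃ f : Perm (Fin (μ.colLen 0)), ⇑f = f0 :=
    ⟨Equiv.ofBijective f0 (Finite.injective_iff_bijective.1 hf0inj), rfl⟩
  refine ⟨f, ?_⟩
  -- `T` of a first-column cell
  have hT0 : ∀ (r : ℕ) (h : (r, 0) ∈ μ.cells),
      (T ⟨(r, 0), h⟩ : ℕ) = (f.symm ⟨r, row_lt_colLen h⟩ : ℕ) := by
    intro r h
    set s := f.symm ⟨r, row_lt_colLen h⟩ with hs
    have hfs : f s = ⟨r, row_lt_colLen h⟩ := by rw [hs, Equiv.apply_symm_apply]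
    have hfs' : f0 s = ⟨r, row_lt_colLen h⟩ := by rw [← hff0]; exact hfs
    have hrow : (T.symm ⟨(s : ℕ), hemb s⟩ : ℕ × ℕ).1 = r := congrArg Fin.val hfs'
    have hcell : T.symm ⟨(s : ℕ), hemb s⟩ = ⟨(r, 0), h⟩ :=
      cell_eq_iff.2 ⟨hrow, hcol0 s⟩
    have : (⟨(s : ℕ), hemb s⟩ : Fin μ.card) = T ⟨(r, 0), h⟩ := by
      rw [← hcell, Equiv.apply_symm_apply]
    rw [← this]
  -- fact (A): first-column cells have smaller labels
  have hA : ∀ u v : μ.cells, (u : ℕ × ℕ).2 = 0 → (v : ℕ × ℕ).2 ≠ 0 → T u < T v := by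
    intro u v hu hv
    have h1 : T u ∈ Z := by rw [hmemZ, Equiv.symm_apply_apply]; exact hu
    have h2 : T v ∉ Z := by rw [hmemZ, Equiv.symm_apply_apply]; exact hv
    rw [hZeq] at h1 h2
    rw [Fin.lt_def]
    omega
  -- fact (B): pivot-row monotonicity transfers the order to left neighbours
  have hB : ∀ (r c : ℕ) (hm : (r, c + 1) ∈ μ.cells) (r' c' : ℕ) (hm' : (r', c' + 1) ∈ μ.cells),
      T ⟨(r, c + 1), hm⟩ < T ⟨(r', c' + 1), hm'⟩ →
        T ⟨(r, c), left_mem hm⟩ < T ⟨(r', c'), left_mem hm'⟩ := by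
    intro r c hm r' c' hm' hlt
    have hple := hmono (le_of_lt hlt)
    rw [pivotRow_succ T hm, pivotRow_succ T hm'] at hple
    have hle : T ⟨(r, c), left_mem hm⟩ ≤ T ⟨(r', c'), left_mem hm'⟩ := by
      rw [Fin.le_def]; omega
    rcases lt_or_eq_of_le hle with h | h
    · exact h
    · exfalso
      have := cell_eq_iff.1 (T.injective h)
      have hcells : (⟨(r, c + 1), hm⟩ : μ.cells) = ⟨(r', c' + 1), hm'⟩ :=
        cell_eq_iff.2 ⟨this.1, show c + 1 = c' + 1 from by
          have h2 : c = c' := this.2; omega⟩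
      rw [hcells] at hlt
      exact lt_irrefl _ hlt
  -- main claim, by strong induction on the sum of the column indices
  have main : ∀ m : ℕ, ∀ u v : μ.cells, (u : ℕ × ℕ).2 + (v : ℕ × ℕ).2 ≤ m →
      (T u < T v ↔ key f u < key f v) := by
    intro m
    induction m using Nat.strong_induction_on with
    | _ m ih =>
      rintro ⟨⟨r, c⟩, hm⟩ ⟨⟨r', c'⟩, hm'⟩ hsum
      cases c with
      | zero =>
        cases c' with
        | zero =>
          rw [key_lt_iff]
          constructor
          · intro hlt
            right
            refine ⟨rfl, ?_⟩
            show (f.symm ⟨r, row_lt_colLen hm⟩ : Fin (μ.colLen 0)) <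
              f.symm ⟨r', row_lt_colLen hm'⟩
            rw [Fin.lt_def, ← hT0 r hm, ← hT0 r' hm']
            exact hlt
          · rintro (h | ⟨-, hlt⟩)
            · exact absurd (show (0 : ℕ) < 0 from h) (lt_irrefl 0)
            · have hlt' : (f.symm ⟨r, row_lt_colLen hm⟩ : Fin (μ.colLen 0)) <
                f.symm ⟨r', row_lt_colLen hm'⟩ := hlt
              rw [Fin.lt_def, ← hT0 r hm, ← hT0 r' hm'] at hlt'
              exact hlt'
        | succ cp' =>
          constructor
          · intro _
            rw [key_lt_iff]
            left
            exact Nat.succ_pos _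
          · intro _
            exact hA _ _ rfl (Nat.succ_ne_zero _)
      | succ cp =>
        cases c' with
        | zero =>
          constructor
          · intro hlt
            exact absurd (hA _ _ rfl (Nat.succ_ne_zero _)) (lt_asymm hlt)
          · intro hk
            rw [key_lt_iff] at hk
            rcases hk with h | ⟨h, -⟩
            · exact absurd (show cp + 1 < 0 from h) (by omega)
            · exact absurd (show cp + 1 = 0 from h) (Nat.succ_ne_zero _)
        | succ cp' =>
          have hsum' : cp + cp' < m := by
            have hsum2 : cp + 1 + (cp' + 1) ≤ m := hsum
            omega
          have hstep : T ⟨(r, cp + 1), hm⟩ < T ⟨(r', cp' + 1), hm'⟩ ↔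
              T ⟨(r, cp), left_mem hm⟩ < T ⟨(r', cp'), left_mem hm'⟩ := by
            constructor
            · exact hB r cp hm r' cp' hm'
            · intro hlt
              rcases lt_trichotomy (T ⟨(r, cp + 1), hm⟩) (T ⟨(r', cp' + 1), hm'⟩) with h | h | h
              · exact h
              · exfalso
                have := cell_eq_iff.1 (T.injective h)
                have hcells : (⟨(r, cp), left_mem hm⟩ : μ.cells) = ⟨(r', cp'), left_mem hm'⟩ :=
                  cell_eq_iff.2 ⟨this.1, show cp = cp' from by
                    have h2 : cp + 1 = cp' + 1 := this.2; omega⟩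
                rw [hcells] at hlt
                exact lt_irrefl _ hlt
              · exfalso
                exact lt_asymm (hB r' cp' hm' r cp hm h) hlt
          rw [hstep, ih (cp + cp') hsum' ⟨(r, cp), left_mem hm⟩ ⟨(r', cp'), left_mem hm'⟩ le_rfl]
          rw [key_lt_iff, key_lt_iff]
          constructor
          · rintro (h | ⟨h, h2⟩)
            · left
              exact Nat.succ_lt_succ (show cp < cp' from h)
            · right
              exact ⟨congrArg Nat.succ (show cp = cp' from h), h2⟩
          · rintro (h | ⟨h, h2⟩)
            · left
              exact Nat.lt_of_succ_lt_succ (show cp + 1 < cp' + 1 from h)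
            · right
              exact ⟨Nat.succ_injective (show cp + 1 = cp' + 1 from h), h2⟩
  -- conclude by uniqueness
  apply equiv_eq_of_lt_iff
  intro u v
  rw [main ((u : ℕ × ℕ).2 + (v : ℕ × ℕ).2) u v le_rfl, Tf_lt_iff]


/-! ### Equal ordered row lengths give equal matrices -/

lemma fin_mk_coe {ℓ : ℕ} (x : Fin ℓ) (h : (x : ℕ) < ℓ) : (⟨(x : ℕ), h⟩ : Fin ℓ) = x :=
  Fin.ext rfl

lemma adj_eq_of_rowLen_eq {f g : Perm (Fin (μ.colLen 0))}
    (hfg : ∀ t, μ.rowLen (f t) = μ.rowLen (g t)) :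
    adjPairMatrix μ (Tf f) = adjPairMatrix μ (Tf g) := by
  have hrow_mem : ∀ u : μ.cells, (u : ℕ × ℕ).2 < μ.rowLen (u : ℕ × ℕ).1 := by
    intro u
    apply YoungDiagram.mem_iff_lt_rowLen.1
    have := u.2
    rw [YoungDiagram.mem_cells] at this
    simpa using this
  have hmemφ : ∀ u : μ.cells,
      (((g (f.symm ⟨(u : ℕ × ℕ).1, row_lt_colLen u.2⟩)) : ℕ), (u : ℕ × ℕ).2) ∈ μ.cells := by
    intro u
    apply mem_cells_of_lt_rowLen
    have h2 := hfg (f.symm ⟨(u : ℕ × ℕ).1, row_lt_colLen u.2⟩)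
    rw [Equiv.apply_symm_apply] at h2
    rw [← h2]
    exact hrow_mem u
  set φ0 : μ.cells → μ.cells := fun u =>
    ⟨(((g (f.symm ⟨(u : ℕ × ℕ).1, row_lt_colLen u.2⟩)) : ℕ), (u : ℕ × ℕ).2), hmemφ u⟩ with hφ0
  have hφ0inj : Function.Injective φ0 := by
    intro u v huv
    have h := cell_eq_iff.1 huv
    apply cell_eq_iff.2
    refine ⟨?_, h.2⟩
    have h1 := Fin.ext (h.1 : _)
    have h2 := f.symm.injective (g.injective h1 : _)
    exact congrArg Fin.val h2
  obtain ⟨φ, hφ⟩ : ∃ φ : μ.cells ≃ μ.cells, ⇑φ = φ0 :=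
    ⟨Equiv.ofBijective φ0 (Finite.injective_iff_bijective.1 hφ0inj), rfl⟩
  have hφapp : ∀ u, φ u = φ0 u := fun u => by rw [hφ]
  have hkey : ∀ u, key g (φ u) = key f u := by
    intro u
    rw [key, key, hφapp]
    congr 1
    refine Prod.ext rfl ?_
    show (g.symm ⟨((g (f.symm ⟨(u : ℕ × ℕ).1, row_lt_colLen u.2⟩)) : ℕ), _⟩ : ℕ) = _
    rw [fin_mk_coe, Equiv.symm_apply_apply]
  have hTff : Tf f = φ.trans (Tf g) := by
    apply equiv_eq_of_lt_iff
    intro u v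
    rw [Tf_lt_iff]
    show key f u < key f v ↔ Tf g (φ u) < Tf g (φ v)
    rw [Tf_lt_iff, hkey u, hkey v]
  have hφrowval : ∀ x : μ.cells, (x : ℕ × ℕ).1 =
      ((g (f.symm ⟨(φ.symm x : ℕ × ℕ).1, row_lt_colLen (φ.symm x).2⟩)) : ℕ) := by
    intro x
    have h0 := congrArg (fun w : μ.cells => (w : ℕ × ℕ).1) (φ.apply_symm_apply x)
    rw [hφapp] at h0
    exact h0.symm
  have hφcol : ∀ x : μ.cells, (φ.symm x : ℕ × ℕ).2 = (x : ℕ × ℕ).2 := by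
    intro x
    have h0 := congrArg (fun w : μ.cells => (w : ℕ × ℕ).2) (φ.apply_symm_apply x)
    rw [hφapp] at h0
    exact h0
  have hφrow : ∀ x y : μ.cells,
      ((φ.symm x : ℕ × ℕ).1 = (φ.symm y : ℕ × ℕ).1 ↔ (x : ℕ × ℕ).1 = (y : ℕ × ℕ).1) := by
    intro x y
    rw [hφrowval x, hφrowval y]
    constructor
    · intro h
      have : (⟨(φ.symm x : ℕ × ℕ).1, row_lt_colLen (φ.symm x).2⟩ : Fin (μ.colLen 0)) =
          ⟨(φ.symm y : ℕ × ℕ).1, row_lt_colLen (φ.symm y).2⟩ := Fin.ext h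
      rw [this]
    · intro h
      have h1 : g (f.symm ⟨(φ.symm x : ℕ × ℕ).1, row_lt_colLen (φ.symm x).2⟩) =
          g (f.symm ⟨(φ.symm y : ℕ × ℕ).1, row_lt_colLen (φ.symm y).2⟩) := Fin.ext h
      have h2 := f.symm.injective (g.injective h1)
      exact congrArg Fin.val h2
  rw [hTff]
  ext i j
  show adjPairMatrix μ (φ.trans (Tf g)) i j = adjPairMatrix μ (Tf g) i j
  unfold adjPairMatrix
  rw [Matrix.of_apply, Matrix.of_apply]
  have hsymm : ∀ k : Fin μ.card, (φ.trans (Tf g)).symm k = φ.symm ((Tf g).symm k) :=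
    fun k => rfl
  rw [hsymm i, hsymm j]
  exact if_congr (and_congr (hφrow _ _)
    (by rw [hφcol, hφcol])) rfl rfl


/-! ### Counting the orbit of a function under `Perm` precomposition -/

lemma card_eq_of_two_surj {X A B : Type*} (G : X → A) (H : X → B)
    (hG : Function.Surjective G) (hH : Function.Surjective H)
    (hiff : ∀ x y, G x = G y ↔ H x = H y) : Nat.card A = Nat.card B := by
  apply Nat.card_congr
  exact {
    toFun := fun a => H (hG a).choose
    invFun := fun b => G (hH b).choose
    left_inv := fun a => by
      have h1 : G (hG a).choose = a := (hG a).choose_spec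
      have h2 := (hH (H (hG a).choose)).choose_spec
      exact ((hiff _ _).2 h2).trans h1
    right_inv := fun b => by
      have h1 : H (hH b).choose = b := (hH b).choose_spec
      have h2 := (hG (G (hH b).choose)).choose_spec
      exact ((hiff _ _).1 h2).trans h1 }

lemma orbit_count {α : Type*} [Fintype α] [DecidableEq α] (r0 : α → ℕ) :
    Nat.card ↥(Set.range fun σ : Perm α => r0 ∘ ⇑σ) *
      ∏ v ∈ Finset.univ.image r0, (Fintype.card {a // r0 a = v}).factorial =
    (Fintype.card α).factorial := by
  have horb : Set.range (fun σ : Perm α => r0 ∘ ⇑σ) = MulAction.orbit (Perm α)ᵈᵐᵃ r0 := by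
    ext x
    constructor
    · rintro ⟨σ, rfl⟩
      exact ⟨DomMulAct.mk σ, rfl⟩
    · rintro ⟨g, rfl⟩
      exact ⟨DomMulAct.mk.symm g, rfl⟩
  have hstab : Nat.card ↥(MulAction.stabilizer (Perm α)ᵈᵐᵃ r0) =
      ∏ v ∈ Finset.univ.image r0, (Fintype.card {a // r0 a = v}).factorial := by
    rw [← DomMulAct.stabilizer_card' r0, ← Nat.card_eq_fintype_card]
    exact Nat.card_congr (Equiv.subtypeEquiv DomMulAct.mk.symm
      (fun g => DomMulAct.mem_stabilizer_iff))
  have hgrp : Nat.card (Perm α)ᵈᵐᵃ = (Fintype.card α).factorial := by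
    rw [Nat.card_congr DomMulAct.mk.symm, Nat.card_eq_fintype_card, Fintype.card_perm]
  rw [horb, ← hstab,
    Nat.card_congr (MulAction.orbitEquivQuotientStabilizer (Perm α)ᵈᵐᵃ r0),
    ← Subgroup.card_eq_card_quotient_mul_card_subgroup, hgrp]


/-! ### Translating to `rowLens` data -/

lemma image_r0 :
    Finset.univ.image (fun t : Fin (μ.colLen 0) => μ.rowLen (t : ℕ)) = μ.rowLens.toFinset := by
  ext v
  rw [Finset.mem_image, List.mem_toFinset, YoungDiagram.rowLens, List.mem_map]
  constructor
  · rintro ⟨t, -, rfl⟩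
    exact ⟨(t : ℕ), List.mem_range.2 t.2, rfl⟩
  · rintro ⟨a, ha, rfl⟩
    exact ⟨⟨a, List.mem_range.1 ha⟩, Finset.mem_univ _, rfl⟩

lemma count_r0 (v : ℕ) :
    μ.rowLens.count v =
      Fintype.card {t : Fin (μ.colLen 0) // μ.rowLen (t : ℕ) = v} := by
  classical
  rw [Fintype.card_subtype]
  have h1 : μ.rowLens.count v =
      ((Finset.range (μ.colLen 0)).filter (fun a => μ.rowLen a = v)).card := by
    rw [YoungDiagram.rowLens, List.count_eq_countP, List.countP_map,
      List.countP_eq_length_filter]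
    rw [Finset.card_def, Finset.filter_val, Finset.range_val]
    show _ = Multiset.card (Multiset.filter _ (↑(List.range (μ.colLen 0)) : Multiset ℕ))
    rw [Multiset.filter_coe, Multiset.coe_card]
    congr 1
  rw [h1]
  apply Finset.card_bij
    (fun a ha => (⟨a, Finset.mem_range.1 (Finset.mem_filter.1 ha).1⟩ : Fin (μ.colLen 0)))
  · intro a ha
    rw [Finset.mem_filter]
    exact ⟨Finset.mem_univ _, (Finset.mem_filter.1 ha).2⟩
  · intro a ha b hb hab
    exact congrArg Fin.val hab
  · intro t ht
    exact ⟨(t : ℕ), Finset.mem_filter.2 ⟨Finset.mem_range.2 t.2, (Finset.mem_filter.1 ht).2⟩, rfl⟩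

lemma colLen_eq_card_fin : Fintype.card (Fin (μ.colLen 0)) = μ.colLen 0 := Fintype.card_fin _

/-! ### Permutation conjugation -/

lemma permMatrix_mul {n : ℕ} (σ : Perm (Fin n)) (A : Matrix (Fin n) (Fin n) ℂ)
    (i j : Fin n) : (permMatrix σ * A) i j = A (σ.symm i) j := by
  rw [Matrix.mul_apply]
  rw [Finset.sum_eq_single (σ.symm i)]
  · rw [permMatrix, Matrix.of_apply, if_pos (σ.apply_symm_apply i), one_mul]
  · intro k _ hk
    rw [permMatrix, Matrix.of_apply, if_neg, zero_mul]
    intro h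
    exact hk (by rw [← h, Equiv.symm_apply_apply])
  · intro h
    exact absurd (Finset.mem_univ _) h

lemma mul_permMatrix {n : ℕ} (σ : Perm (Fin n)) (A : Matrix (Fin n) (Fin n) ℂ)
    (i j : Fin n) : (A * permMatrix σ⁻¹) i j = A i (σ.symm j) := by
  rw [Matrix.mul_apply]
  rw [Finset.sum_eq_single (σ.symm j)]
  · rw [permMatrix, Matrix.of_apply, if_pos (show σ⁻¹ j = σ.symm j from rfl), mul_one]
  · intro k _ hk
    rw [permMatrix, Matrix.of_apply, if_neg, mul_zero]
    intro h
    exact hk h.symm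
  · intro h
    exact absurd (Finset.mem_univ _) h

lemma conj_eq_adj (ord : Fin μ.card ≃ μ.cells) (σ : Perm (Fin μ.card)) :
    permMatrix σ * adjPairMatrix μ ord.symm * permMatrix σ⁻¹ =
      adjPairMatrix μ (ord.symm.trans σ) := by
  ext i j
  rw [mul_permMatrix, permMatrix_mul]
  rfl

lemma exists_conj_iff (ord : Fin μ.card ≃ μ.cells) (M : Matrix (Fin μ.card) (Fin μ.card) ℂ) :
    (∃ σ : Perm (Fin μ.card), M = permMatrix σ * adjPairMatrix μ ord.symm * permMatrix σ⁻¹) ↔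
      ∃ T : μ.cells ≃ Fin μ.card, M = adjPairMatrix μ T := by
  constructor
  · rintro ⟨σ, rfl⟩
    exact ⟨ord.symm.trans σ, conj_eq_adj ord σ⟩
  · rintro ⟨T, rfl⟩
    refine ⟨ord.trans T, ?_⟩
    have hT : ord.symm.trans (ord.trans T) = T :=
      Equiv.ext fun u => by
        rw [Equiv.trans_apply, Equiv.trans_apply, Equiv.apply_symm_apply]
    rw [conj_eq_adj, hT]

end Stmt5

/-- letting `N` be the nilpotent Jordan matrix of the Young diagram `μ`
(the adjacent-pair matrix of the English filling), the number of distinct matrices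
`σ N σ⁻¹` (for `σ` ranging over permutation matrices) in highest form is
`ℓ! / (d₁! d₂! ⋯ d_k!)`, where `ℓ = μ.colLen 0` is the number of rows of `μ` and the
`dᵢ` are the multiplicities of the distinct row lengths of `μ`. -/
theorem stmt5 (μ : YoungDiagram) (ord : Fin μ.card ≃ μ.cells) (hord : EnglishOrd μ ord) :
    {M : Matrix (Fin μ.card) (Fin μ.card) ℂ |
        (∃ σ : Equiv.Perm (Fin μ.card),
          M = permMatrix σ * adjPairMatrix μ ord.symm * permMatrix σ⁻¹) ∧
        IsHighestForm M}.ncard =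
      Nat.factorial (μ.colLen 0) /
        ∏ v ∈ μ.rowLens.toFinset, Nat.factorial (μ.rowLens.count v) := by
    classical
  set r0 : Fin (μ.colLen 0) → ℕ := fun t => μ.rowLen (t : ℕ) with hr0
  have hset : {M : Matrix (Fin μ.card) (Fin μ.card) ℂ |
        (∃ σ : Equiv.Perm (Fin μ.card),
          M = permMatrix σ * adjPairMatrix μ ord.symm * permMatrix σ⁻¹) ∧
        IsHighestForm M} =
      Set.range (fun f : Equiv.Perm (Fin (μ.colLen 0)) => adjPairMatrix μ (Stmt5.Tf f)) := by
    ext M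
    simp only [Set.mem_setOf_eq, Set.mem_range]
    constructor
    · rintro ⟨hconj, hHF⟩
      obtain ⟨T, rfl⟩ := (Stmt5.exists_conj_iff ord M).1 hconj
      obtain ⟨f, rfl⟩ := Stmt5.exists_Tf_of_highestForm T hHF
      exact ⟨f, rfl⟩
    · rintro ⟨f, rfl⟩
      exact ⟨(Stmt5.exists_conj_iff ord _).2 ⟨Stmt5.Tf f, rfl⟩, Stmt5.highestForm_Tf f⟩
  rw [hset, ← Nat.card_coe_set_eq]
  have hcard : Nat.card ↥(Set.range fun f : Equiv.Perm (Fin (μ.colLen 0)) =>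
        adjPairMatrix μ (Stmt5.Tf f)) =
      Nat.card ↥(Set.range fun σ : Equiv.Perm (Fin (μ.colLen 0)) => r0 ∘ ⇑σ) := by
    apply Stmt5.card_eq_of_two_surj
      (fun f : Equiv.Perm (Fin (μ.colLen 0)) =>
        (⟨adjPairMatrix μ (Stmt5.Tf f), f, rfl⟩ :
          ↥(Set.range fun f : Equiv.Perm (Fin (μ.colLen 0)) => adjPairMatrix μ (Stmt5.Tf f))))
      (fun f : Equiv.Perm (Fin (μ.colLen 0)) =>
        (⟨r0 ∘ ⇑f, f, rfl⟩ : ↥(Set.range fun σ : Equiv.Perm (Fin (μ.colLen 0)) => r0 ∘ ⇑σ)))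
    · rintro ⟨M, f, rfl⟩
      exact ⟨f, rfl⟩
    · rintro ⟨x, f, rfl⟩
      exact ⟨f, rfl⟩
    · intro f g
      simp only [Subtype.ext_iff]
      constructor
      · intro h
        funext t
        exact Stmt5.rowLen_eq_of_adj_eq h t
      · intro h
        exact Stmt5.adj_eq_of_rowLen_eq (fun t => congrFun h t)
  rw [hcard]
  have horb := Stmt5.orbit_count r0
  rw [Stmt5.image_r0] at horb
  have hprod : ∏ v ∈ μ.rowLens.toFinset, (Fintype.card {a // r0 a = v}).factorial =
      ∏ v ∈ μ.rowLens.toFinset, Nat.factorial (μ.rowLens.count v) := by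
    apply Finset.prod_congr rfl
    intro v _
    rw [Stmt5.count_r0 v]
  rw [hprod, Fintype.card_fin] at horb
  have hpos : 0 < ∏ v ∈ μ.rowLens.toFinset, Nat.factorial (μ.rowLens.count v) :=
    Finset.prod_pos fun v _ => Nat.factorial_pos _
  rw [← horb, Nat.mul_div_cancel _ hpos]
end

section
/- Let N be the nilpotent Jordan matrix for Young diagram λ with n boxes, h a Hessenberg function with Hessenberg space H, and σ ∈ S_n. Then the map w ↦ φ_{λ,σ}^{-1}(w^{-1}) is a bijection from {w ∈ S_n : w^{-1}(σ N σ^{-1})w ∈ H} onto the set of (h,λ)-permissible fillings of λ. -/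
/-- Value `i` is directly left-adjacent to value `j` in the filling `T`. -/
def AdjacentE (μ : YoungDiagram) (T : μ.cells ≃ Fin μ.card) (i j : Fin μ.card) : Prop :=
  (T.symm j : ℕ × ℕ).1 = (T.symm i : ℕ × ℕ).1 ∧
    (T.symm j : ℕ × ℕ).2 = (T.symm i : ℕ × ℕ).2 + 1

/-- `(h,λ)`-permissibility of a filling. -/
def Permissible (μ : YoungDiagram) (h : Fin μ.card → Fin μ.card)
    (T : μ.cells ≃ Fin μ.card) : Prop :=
  ∀ i j, AdjacentE μ T i j → i ≤ h j

/-- `φ_{λ,σ}⁻¹(τ)`: the filling whose reading, in the box order determined by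
`φ_λ⁻¹(σ)`, is the one-line notation of `τ`. -/
def phiLambdaSigmaInv (μ : YoungDiagram) (ord : Fin μ.card ≃ μ.cells)
    (σ τ : Equiv.Perm (Fin μ.card)) : μ.cells ≃ Fin μ.card :=
  ord.symm.trans (σ.trans τ)

lemma mul_permMatrix {n : ℕ} (A : Matrix (Fin n) (Fin n) ℂ) (w : Equiv.Perm (Fin n))
    (i j : Fin n) : (A * permMatrix w) i j = A i (w j) := by
  simp [permMatrix, Matrix.mul_apply, mul_ite, mul_one, mul_zero]

lemma permMatrix_mul {n : ℕ} (w : Equiv.Perm (Fin n)) (A : Matrix (Fin n) (Fin n) ℂ)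
    (i j : Fin n) : (permMatrix w * A) i j = A (w⁻¹ i) j := by
  simp [permMatrix, Matrix.mul_apply, ite_mul, one_mul, zero_mul,
    Equiv.apply_eq_iff_eq_symm_apply, Equiv.Perm.inv_def]

lemma entry_eq (μ : YoungDiagram) (ord : Fin μ.card ≃ μ.cells)
    (σ w : Equiv.Perm (Fin μ.card)) (i j : Fin μ.card) :
    (permMatrix w⁻¹ * (permMatrix σ * adjPairMatrix μ ord.symm * permMatrix σ⁻¹) *
      permMatrix w) i j
      = adjPairMatrix μ ord.symm (σ⁻¹ (w i)) (σ⁻¹ (w j)) := by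
  rw [mul_permMatrix, permMatrix_mul, mul_permMatrix, permMatrix_mul, inv_inv]

lemma key_iff (μ : YoungDiagram) (ord : Fin μ.card ≃ μ.cells)
    (h : Fin μ.card → Fin μ.card) (σ w : Equiv.Perm (Fin μ.card)) :
    (∀ i j : Fin μ.card, h j < i →
        (permMatrix w⁻¹ * (permMatrix σ * adjPairMatrix μ ord.symm * permMatrix σ⁻¹) *
          permMatrix w) i j = 0)
      ↔ Permissible μ h (phiLambdaSigmaInv μ ord σ w⁻¹) := by
  have hT : ∀ k : Fin μ.card,
      ((phiLambdaSigmaInv μ ord σ w⁻¹).symm k : ℕ × ℕ) = (ord (σ⁻¹ (w k)) : ℕ × ℕ) := by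
    intro k
    simp [phiLambdaSigmaInv, Equiv.Perm.inv_def]
  constructor
  · intro hw i j hadj
    by_contra hlt
    have := hw i j (lt_of_not_ge hlt)
    rw [entry_eq] at this
    simp only [adjPairMatrix, Matrix.of_apply] at this
    rw [if_pos] at this
    · exact one_ne_zero this
    · rcases hadj with ⟨h1, h2⟩
      rw [hT i, hT j] at h1 h2
      exact ⟨h1, h2⟩
  · intro hperm i j hij
    rw [entry_eq]
    simp only [adjPairMatrix, Matrix.of_apply]
    rw [if_neg]
    intro hc
    have := hperm i j ⟨by rw [hT i, hT j]; exact hc.1, by rw [hT i, hT j]; exact hc.2⟩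
    exact absurd hij (not_lt.mpr this)

/-- let `N` be the nilpotent Jordan matrix for `μ` (the adjacent-pair
matrix of the English filling), `h` a Hessenberg function with Hessenberg space `H`,
and `σ ∈ S_n`. The map `w ↦ φ_{λ,σ}⁻¹(w⁻¹)` is a bijection from
`{w : w⁻¹ (σ N σ⁻¹) w ∈ H}` (the `S¹`-fixed points of `Hess(σNσ⁻¹, h)`) onto the set
of `(h,λ)`-permissible fillings of `μ`. -/
theorem stmt9 (μ : YoungDiagram) (ord : Fin μ.card ≃ μ.cells) (hord : EnglishOrd μ ord)
    (h : Fin μ.card → Fin μ.card) (hh1 : ∀ i, i ≤ h i) (hh2 : Monotone h)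
    (σ : Equiv.Perm (Fin μ.card)) :
    Set.BijOn (fun w : Equiv.Perm (Fin μ.card) => phiLambdaSigmaInv μ ord σ w⁻¹)
      {w : Equiv.Perm (Fin μ.card) |
        ∀ i j : Fin μ.card, h j < i →
          (permMatrix w⁻¹ * (permMatrix σ * adjPairMatrix μ ord.symm * permMatrix σ⁻¹) *
            permMatrix w) i j = 0}
      {T : μ.cells ≃ Fin μ.card | Permissible μ h T} := by

  constructor
  · intro w hw
    exact (key_iff μ ord h σ w).mp hw
  constructor
  · intro w1 hw1 w2 hw2 heq
    have : ∀ x, w1⁻¹ x = w2⁻¹ x := by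
      intro x
      have := congrFun (congrArg (fun T : μ.cells ≃ Fin μ.card => (T : μ.cells → Fin μ.card))
        heq) (ord (σ⁻¹ x))
      simpa [phiLambdaSigmaInv] using this
    have : w1⁻¹ = w2⁻¹ := Equiv.ext this
    exact inv_injective this
  · intro T hT
    set u : Equiv.Perm (Fin μ.card) := (σ⁻¹.trans ord).trans T with hu
    refine ⟨u⁻¹, ?_, ?_⟩
    · have heq : phiLambdaSigmaInv μ ord σ u⁻¹⁻¹ = T := by
        rw [inv_inv]
        ext c
        simp [phiLambdaSigmaInv, hu]
      rw [Set.mem_setOf_eq, key_iff μ ord h σ, heq]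
      exact hT
    · show phiLambdaSigmaInv μ ord σ u⁻¹⁻¹ = T
      rw [inv_inv]
      ext c
      simp [phiLambdaSigmaInv, hu]
end
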